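/- Let (Y,Σ,m) be a probability space, g : Y → ℝ a bounded measurable function, α = {A_1,…,A_r} a finite measurable partition of Y, and β a finite measurable partition of Y. Then H_m(α | β) + ∫ g dm ≤ max_{B∈β, m(B)>0} log Σ_{A∈α, m(A∩B)>0} exp( sup_{y∈A∩B} g(y) ), where H_m(α|β) = Σ_{B∈β} m(B) H_{m_B}(α) with m_B the conditional measure of m on B. -/

import Mathlib

open MeasureTheory Set

namespace PreImageCondEntropyBound

/-- Gibbs inequality: `∑ wᵢ (aᵢ - log wᵢ) ≤ log ∑ exp aᵢ` for positive weights summing to 1. -/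
lemma gibbs {ι : Type} (t : Finset ι) (w a : ι → ℝ) (hw : ∀ i ∈ t, 0 < w i)
    (hsum : ∑ i ∈ t, w i = 1) :
    ∑ i ∈ t, w i * (a i - Real.log (w i)) ≤ Real.log (∑ i ∈ t, Real.exp (a i)) := by
  have key : ∑ i ∈ t, w i • Real.log (Real.exp (a i) / w i) ≤
      Real.log (∑ i ∈ t, w i • (Real.exp (a i) / w i)) :=
    (strictConcaveOn_log_Ioi.concaveOn).le_map_sum (fun i hi => (hw i hi).le) hsum
      (fun i hi => div_pos (Real.exp_pos _) (hw i hi))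
  have h1 : ∑ i ∈ t, w i • Real.log (Real.exp (a i) / w i)
      = ∑ i ∈ t, w i * (a i - Real.log (w i)) := by
    refine Finset.sum_congr rfl fun i hi => ?_
    rw [smul_eq_mul, Real.log_div (Real.exp_ne_zero _) (hw i hi).ne', Real.log_exp]
  have h2 : ∑ i ∈ t, w i • (Real.exp (a i) / w i) = ∑ i ∈ t, Real.exp (a i) := by
    refine Finset.sum_congr rfl fun i hi => ?_
    rw [smul_eq_mul, mul_div_cancel₀ _ (hw i hi).ne']
  rw [h1, h2] at key
  exact key

/-- The basic estimate: for a probability space `(Y,Σ,m)`, a bounded measurable `g`, and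
    finite measurable partitions `α = {A_i}` and `β = {B_j}` of `Y`,
    `H_m(α|β) + ∫ g dm ≤ max_{B ∈ β, m(B)>0} log ∑_{A ∈ α, m(A∩B)>0} exp(sup_{A∩B} g)`,
    where `H_m(α|β) = −∑_{i,j} m(A_i∩B_j) log (m(A_i∩B_j)/m(B_j))`. -/
theorem condEntropy_add_integral_le
    {Y : Type} [MeasurableSpace Y] (m : Measure Y) [IsProbabilityMeasure m]
    (g : Y → ℝ) (hgmeas : Measurable g) (hgbdd : ∃ C : ℝ, ∀ y, |g y| ≤ C)
    {ι κ : Type} [Fintype ι] [Fintype κ] (A : ι → Set Y) (B : κ → Set Y)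
    (hAmeas : ∀ i, MeasurableSet (A i)) (hAdisj : ∀ i i', i ≠ i' → Disjoint (A i) (A i'))
    (hAcover : (⋃ i, A i) = univ)
    (hBmeas : ∀ j, MeasurableSet (B j)) (hBdisj : ∀ j j', j ≠ j' → Disjoint (B j) (B j'))
    (hBcover : (⋃ j, B j) = univ) :
    (- ∑ j, ∑ i, (m (A i ∩ B j)).toReal *
        Real.log ((m (A i ∩ B j)).toReal / (m (B j)).toReal)) + ∫ y, g y ∂m
      ≤ sSup {r : ℝ | ∃ j : κ, 0 < m (B j) ∧
          r = Real.log (∑ i, Set.indicator {i : ι | 0 < m (A i ∩ B j)}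
            (fun i => Real.exp (sSup (g '' (A i ∩ B j)))) i)} := by
  classical
  obtain ⟨C, hC⟩ := hgbdd
  -- integrability of g
  have hg_int : Integrable g m :=
    ⟨hgmeas.aestronglyMeasurable,
      HasFiniteIntegral.of_bounded (C := C) (ae_of_all _ fun y => by
        simpa [Real.norm_eq_abs] using hC y)⟩
  -- notation
  set P : ι → κ → ℝ := fun i j => (m (A i ∩ B j)).toReal with hP
  set Q : κ → ℝ := fun j => (m (B j)).toReal with hQ
  set a : ι → κ → ℝ := fun i j => sSup (g '' (A i ∩ B j)) with ha
  set S : Set ℝ := {r : ℝ | ∃ j : κ, 0 < m (B j) ∧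
      r = Real.log (∑ i, Set.indicator {i : ι | 0 < m (A i ∩ B j)}
        (fun i => Real.exp (sSup (g '' (A i ∩ B j)))) i)} with hS
  -- S is bddAbove
  have hSsub : S ⊆ Set.range (fun j : κ => Real.log (∑ i,
      Set.indicator {i : ι | 0 < m (A i ∩ B j)}
        (fun i => Real.exp (sSup (g '' (A i ∩ B j)))) i)) := by
    rintro r ⟨j, _, rfl⟩; exact ⟨j, rfl⟩
  have hSbdd : BddAbove S := (Set.finite_range _).bddAbove.mono hSsub
  -- split the integral over the partition by pairs
  have hcover_pair : (⋃ p : κ × ι, A p.2 ∩ B p.1) = univ := by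
    ext y
    simp only [mem_iUnion, mem_univ, iff_true]
    have hy1 : y ∈ ⋃ i, A i := hAcover ▸ mem_univ y
    have hy2 : y ∈ ⋃ j, B j := hBcover ▸ mem_univ y
    obtain ⟨i, hi⟩ := mem_iUnion.mp hy1
    obtain ⟨j, hj⟩ := mem_iUnion.mp hy2
    exact ⟨(j, i), hi, hj⟩
  have hdisj_pair : Pairwise (Function.onFun Disjoint (fun p : κ × ι => A p.2 ∩ B p.1)) := by
    rintro ⟨j, i⟩ ⟨j', i'⟩ hne
    rcases eq_or_ne i i' with rfl | hii
    · have hjj : j ≠ j' := by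
        intro h; exact hne (by simp [h])
      exact Disjoint.mono (inter_subset_right) (inter_subset_right) (hBdisj j j' hjj)
    · exact Disjoint.mono (inter_subset_left) (inter_subset_left) (hAdisj i i' hii)
  have hint_split : ∫ y, g y ∂m = ∑ j, ∑ i, ∫ y in A i ∩ B j, g y ∂m := by
    have hmeas_pair : ∀ p : κ × ι, MeasurableSet (A p.2 ∩ B p.1) :=
      fun p => (hAmeas p.2).inter (hBmeas p.1)
    have := integral_iUnion hmeas_pair hdisj_pair
      (f := g) (by rw [hcover_pair]; exact hg_int.integrableOn)
    rw [hcover_pair] at this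
    rw [Measure.restrict_univ] at this
    rw [this, tsum_fintype, Fintype.sum_prod_type]
  -- sum of measures over i equals measure of B j
  have hsum_meas : ∀ j, ∑ i, P i j = Q j := by
    intro j
    have hU : (⋃ i, A i ∩ B j) = B j := by
      rw [← Set.iUnion_inter, hAcover, Set.univ_inter]
    have hd : Pairwise (Function.onFun Disjoint (fun i => A i ∩ B j)) := fun i i' hne =>
      Disjoint.mono inter_subset_left inter_subset_left (hAdisj i i' hne)
    have := measure_iUnion (μ := m) hd (fun i => (hAmeas i).inter (hBmeas j))
    rw [hU, tsum_fintype] at this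
    rw [hQ, hP]
    simp only
    rw [this, ENNReal.toReal_sum (fun i _ => measure_ne_top m _)]
  -- sum of Q equals 1
  have hsum_Q : ∑ j, Q j = 1 := by
    have hd : Pairwise (Function.onFun Disjoint B) := fun j j' hne => hBdisj j j' hne
    have := measure_iUnion (μ := m) hd hBmeas
    rw [hBcover, tsum_fintype] at this
    have h1 : (1 : ENNReal) = ∑ j, m (B j) := by rw [← this, measure_univ]
    rw [hQ]
    simp only
    rw [← ENNReal.toReal_sum (fun j _ => measure_ne_top m _), ← h1, ENNReal.toReal_one]
  -- main per-j estimate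
  have key : ∀ j, ∑ i, (-(P i j * Real.log (P i j / Q j)) + ∫ y in A i ∩ B j, g y ∂m)
      ≤ Q j * sSup S := by
    intro j
    rcases eq_or_lt_of_le (zero_le : (0 : ENNReal) ≤ m (B j)) with hq0 | hq
    · -- m (B j) = 0
      have hq0' : m (B j) = 0 := hq0.symm
      have hz : ∀ i, m (A i ∩ B j) = 0 := fun i =>
        measure_mono_null inter_subset_right hq0'
      have : ∀ i, (-(P i j * Real.log (P i j / Q j)) + ∫ y in A i ∩ B j, g y ∂m) = 0 := by
        intro i
        have hPz : P i j = 0 := by rw [hP]; simp [hz i]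
        have hIz : ∫ y in A i ∩ B j, g y ∂m = 0 := by
          rw [Measure.restrict_eq_zero.mpr (hz i), integral_zero_measure]
        rw [hPz, hIz]; ring
      rw [Finset.sum_congr rfl (fun i _ => this i), Finset.sum_const, smul_zero]
      have hQz : Q j = 0 := by rw [hQ]; simp [hq0']
      rw [hQz, zero_mul]
    · -- m (B j) > 0
      have hQpos : 0 < Q j := ENNReal.toReal_pos hq.ne' (measure_ne_top m _)
      set T : Finset ι := Finset.univ.filter (fun i => 0 < m (A i ∩ B j)) with hT
      -- the element of S for this j
      have htj_mem : Real.log (∑ i ∈ T, Real.exp (a i j)) ∈ S := by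
        refine ⟨j, hq, ?_⟩
        congr 1
        rw [hT, Finset.sum_filter]
        refine Finset.sum_congr rfl fun i _ => ?_
        rw [Set.indicator_apply]
        simp only [Set.mem_setOf_eq, ha]
      have htj_le : Real.log (∑ i ∈ T, Real.exp (a i j)) ≤ sSup S := le_csSup hSbdd htj_mem
      -- per-i bound
      have hstep : ∑ i, (-(P i j * Real.log (P i j / Q j)) + ∫ y in A i ∩ B j, g y ∂m)
          ≤ ∑ i ∈ T, P i j * (a i j - Real.log (P i j / Q j)) := by
        rw [← Finset.sum_filter_add_sum_filter_not Finset.univ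
          (fun i => 0 < m (A i ∩ B j))]
        have hzero : ∑ i ∈ Finset.univ.filter (fun i => ¬ 0 < m (A i ∩ B j)),
            (-(P i j * Real.log (P i j / Q j)) + ∫ y in A i ∩ B j, g y ∂m) = 0 := by
          refine Finset.sum_eq_zero fun i hi => ?_
          rw [Finset.mem_filter] at hi
          have hz : m (A i ∩ B j) = 0 := by
            rcases eq_or_lt_of_le (zero_le : (0 : ENNReal) ≤ m (A i ∩ B j)) with h | h
            · exact h.symm
            · exact absurd h hi.2
          have hPz : P i j = 0 := by rw [hP]; simp [hz]
          have hIz : ∫ y in A i ∩ B j, g y ∂m = 0 := by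
            rw [Measure.restrict_eq_zero.mpr hz, integral_zero_measure]
          rw [hPz, hIz]; ring
        rw [hzero, add_zero]
        refine Finset.sum_le_sum fun i hi => ?_
        rw [Finset.mem_filter] at hi
        have hmz : m (A i ∩ B j) ≠ 0 := hi.2.ne'
        have hne : (A i ∩ B j).Nonempty := nonempty_of_measure_ne_zero hmz
        have hbdd : BddAbove (g '' (A i ∩ B j)) :=
          ⟨C, fun x ⟨y, _, hy⟩ => hy ▸ (abs_le.mp (hC y)).2⟩
        have hle : ∀ y ∈ A i ∩ B j, g y ≤ a i j := fun y hy =>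
          le_csSup hbdd (mem_image_of_mem g hy)
        have hInt : ∫ y in A i ∩ B j, g y ∂m ≤ P i j * a i j := by
          have h1 : ∫ y in A i ∩ B j, g y ∂m ≤ ∫ _ in A i ∩ B j, a i j ∂m := by
            refine setIntegral_mono_on hg_int.integrableOn
              (integrableOn_const (measure_ne_top m _))
              ((hAmeas i).inter (hBmeas j)) hle
          rwa [setIntegral_const, smul_eq_mul] at h1
        have := add_le_add_right hInt (-(P i j * Real.log (P i j / Q j)))
        calc -(P i j * Real.log (P i j / Q j)) + ∫ y in A i ∩ B j, g y ∂m
            ≤ -(P i j * Real.log (P i j / Q j)) + P i j * a i j := this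
          _ = P i j * (a i j - Real.log (P i j / Q j)) := by ring
      -- Gibbs step
      have hw : ∀ i ∈ T, 0 < P i j / Q j := by
        intro i hi
        rw [Finset.mem_filter] at hi
        exact div_pos (ENNReal.toReal_pos hi.2.ne' (measure_ne_top m _)) hQpos
      have hwsum : ∑ i ∈ T, P i j / Q j = 1 := by
        have h0 : ∑ i ∈ T, P i j = ∑ i, P i j := by
          rw [hT]
          refine Finset.sum_filter_of_ne fun i _ hne => ?_
          refine (zero_le : (0 : ENNReal) ≤ m (A i ∩ B j)).lt_of_ne fun hz => hne ?_
          rw [hP]; simp [← hz]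
        rw [← Finset.sum_div, h0, hsum_meas j, div_self hQpos.ne']
      have hgibbs := gibbs T (fun i => P i j / Q j) (fun i => a i j) hw hwsum
      have heq : ∑ i ∈ T, P i j * (a i j - Real.log (P i j / Q j))
          = Q j * ∑ i ∈ T, (P i j / Q j) * (a i j - Real.log (P i j / Q j)) := by
        rw [Finset.mul_sum]
        refine Finset.sum_congr rfl fun i hi => ?_
        field_simp
      calc ∑ i, (-(P i j * Real.log (P i j / Q j)) + ∫ y in A i ∩ B j, g y ∂m)
          ≤ ∑ i ∈ T, P i j * (a i j - Real.log (P i j / Q j)) := hstep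
        _ = Q j * ∑ i ∈ T, (P i j / Q j) * (a i j - Real.log (P i j / Q j)) := heq
        _ ≤ Q j * Real.log (∑ i ∈ T, Real.exp (a i j)) := by
            exact mul_le_mul_of_nonneg_left hgibbs hQpos.le
        _ ≤ Q j * sSup S := mul_le_mul_of_nonneg_left htj_le hQpos.le
  -- combine
  have hLHS : (- ∑ j, ∑ i, P i j * Real.log (P i j / Q j)) + ∫ y, g y ∂m
      = ∑ j, ∑ i, (-(P i j * Real.log (P i j / Q j)) + ∫ y in A i ∩ B j, g y ∂m) := by
    rw [hint_split, ← Finset.sum_neg_distrib, ← Finset.sum_add_distrib]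
    refine Finset.sum_congr rfl fun j _ => ?_
    rw [← Finset.sum_neg_distrib, ← Finset.sum_add_distrib]
  rw [hLHS]
  calc ∑ j, ∑ i, (-(P i j * Real.log (P i j / Q j)) + ∫ y in A i ∩ B j, g y ∂m)
      ≤ ∑ j, Q j * sSup S := Finset.sum_le_sum fun j _ => key j
    _ = (∑ j, Q j) * sSup S := by rw [Finset.sum_mul]
    _ = sSup S := by rw [hsum_Q, one_mul]

end PreImageCondEntropyBound
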